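/- Let X be a set, K : X × X → ℂ a bounded function satisfying condition (A1), x₁, …, xₙ ∈ X pairwise distinct points, and β ≥ 1 a real number. Then the following are equivalent: (i) ‖(K[x])^{-1} K_x(t)‖₁ ≤ β for every t ∈ X; (ii) for every y ∈ ℂⁿ and every c ∈ ℓ¹(X) with Φ(c)(x_i) = y_i for all i ∈ {1, …, n}, one has ‖c‖_{ℓ¹(X)} ≥ (1/β) ‖(K[x])^{-1} y‖₁. -/

import Mathlib

open Matrix

/-- The kernel matrix `K[x]`, with `(j,k)` entry `K(x_k, x_j)`. -/
noncomputable def kernelMatrix {X : Type*} (K : X → X → ℂ) {n : ℕ} (x : Fin n → X) :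
    Matrix (Fin n) (Fin n) ℂ := Matrix.of fun j k => K (x k) (x j)

/-- The vector `K_x(t)`, with `j`-th entry `K(t, x_j)`. -/
noncomputable def kernelVec {X : Type*} (K : X → X → ℂ) {n : ℕ} (x : Fin n → X) (t : X) :
    Fin n → ℂ := fun j => K t (x j)

/-- The `ℓ¹` norm of a vector in `ℂⁿ`. -/
noncomputable def l1norm {n : ℕ} (v : Fin n → ℂ) : ℝ := ∑ j, ‖v j‖

/-- Condition (A1): every kernel matrix at finitely many pairwise distinct points is
nonsingular. -/
def CondA1 {X : Type*} (K : X → X → ℂ) : Prop :=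
  ∀ (n : ℕ) (x : Fin n → X), Function.Injective x → IsUnit (kernelMatrix K x).det

/-- `Φ(c)(x) = ∑_{t ∈ X} c_t K(t, x)` for `c ∈ ℓ¹(X)`. -/
noncomputable def PhiMap {X : Type*} (K : X → X → ℂ) (c : X → ℂ) (x : X) : ℂ :=
  ∑' t, c t * K t x

theorem stmt_19 {X : Type*} (K : X → X → ℂ) (M : ℝ)
    (hK : ∀ s t, ‖K s t‖ ≤ M) (hA1 : CondA1 K)
    (n : ℕ) (x : Fin n → X) (hx : Function.Injective x)
    (β : ℝ) (hβ : 1 ≤ β) :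
    (∀ t : X, l1norm ((kernelMatrix K x)⁻¹ *ᵥ kernelVec K x t) ≤ β)
      ↔
    ∀ y : Fin n → ℂ, ∀ c : X → ℂ, Summable (fun t => ‖c t‖) →
      (∀ i, PhiMap K c (x i) = y i) →
      (1 / β) * l1norm ((kernelMatrix K x)⁻¹ *ᵥ y) ≤ ∑' t, ‖c t‖ := by

  classical
  have hβpos : (0:ℝ) < β := lt_of_lt_of_le one_pos hβ
  set A := (kernelMatrix K x)⁻¹ with hA
  constructor
  · intro h y c hc hyc
    rcases isEmpty_or_nonempty X with hX | hX
    · have hn : n = 0 := by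
        by_contra hn
        exact (IsEmpty.false (x ⟨0, Nat.pos_of_ne_zero hn⟩))
      subst hn
      have hz : l1norm (A *ᵥ y) = 0 := by simp [l1norm]
      rw [hz, mul_zero]
      exact tsum_nonneg fun t => norm_nonneg _
    · obtain ⟨t0⟩ := hX
      have hM : 0 ≤ M := le_trans (norm_nonneg _) (hK t0 t0)
      have hsum1 : ∀ (j k : Fin n), Summable (fun t => A j k * (c t * K t (x k))) := by
        intro j k
        apply Summable.of_norm
        refine Summable.of_nonneg_of_le (fun t => norm_nonneg _)
          (fun t => ?_) (hc.mul_left (‖A j k‖ * M))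
        calc ‖A j k * (c t * K t (x k))‖
            = ‖A j k‖ * (‖c t‖ * ‖K t (x k)‖) := by
              simp [_root_.map_mul]
          _ ≤ ‖A j k‖ * (‖c t‖ * M) := by
              gcongr
              exact hK _ _
          _ = ‖A j k‖ * M * ‖c t‖ := by ring
      have key : ∀ j, (A *ᵥ y) j = ∑' t, c t * (A *ᵥ kernelVec K x t) j := by
        intro j
        have hy : ∀ k, y k = ∑' t, c t * K t (x k) := fun k => (hyc k).symm
        have h0 : (A *ᵥ y) j = ∑ k, A j k * y k := rfl
        rw [h0]
        calc ∑ k, A j k * y k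
            = ∑ k, ∑' t, A j k * (c t * K t (x k)) := by
              refine Finset.sum_congr rfl fun k _ => ?_
              rw [hy k, tsum_mul_left]
          _ = ∑' t, ∑ k, A j k * (c t * K t (x k)) := (Summable.tsum_finsetSum fun k _ => hsum1 j k).symm
          _ = ∑' t, c t * (A *ᵥ kernelVec K x t) j := by
              refine tsum_congr fun t => ?_
              simp only [mulVec, dotProduct, kernelVec, Finset.mul_sum]
              exact Finset.sum_congr rfl fun k _ => by ring
      have hcomp : ∀ (t : X) (j : Fin n), ‖(A *ᵥ kernelVec K x t) j‖ ≤ β := by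
        intro t j
        refine le_trans ?_ (h t)
        exact Finset.single_le_sum
          (f := fun i => ‖(A *ᵥ kernelVec K x t) i‖)
          (fun i _ => norm_nonneg _) (Finset.mem_univ j)
      have hsumj : ∀ j, Summable (fun t =>
          ‖c t‖ * ‖(A *ᵥ kernelVec K x t) j‖) := by
        intro j
        exact Summable.of_nonneg_of_le
          (fun t => mul_nonneg (norm_nonneg _) (norm_nonneg _))
          (fun t => mul_le_mul_of_nonneg_left (hcomp t j) (norm_nonneg _))
          (hc.mul_right β)
      have hbound : l1norm (A *ᵥ y) ≤ β * ∑' t, ‖c t‖ := by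
        have h1 : l1norm (A *ᵥ y) ≤
            ∑ j, ∑' t, ‖c t‖ * ‖(A *ᵥ kernelVec K x t) j‖ := by
          unfold l1norm
          refine Finset.sum_le_sum fun j _ => ?_
          rw [key j]
          have hs : Summable (fun t => ‖c t * (A *ᵥ kernelVec K x t) j‖) := by
            simpa [_root_.map_mul] using hsumj j
          calc ‖∑' t, c t * (A *ᵥ kernelVec K x t) j‖
              = ‖∑' t, c t * (A *ᵥ kernelVec K x t) j‖ := rfl
            _ ≤ ∑' t, ‖c t * (A *ᵥ kernelVec K x t) j‖ := norm_tsum_le_tsum_norm hs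
            _ = ∑' t, ‖c t‖ * ‖(A *ᵥ kernelVec K x t) j‖ := by
                refine tsum_congr fun t => ?_
                simp [_root_.map_mul]
        have h2 : ∑ j, ∑' t, ‖c t‖ * ‖(A *ᵥ kernelVec K x t) j‖
            = ∑' t, ‖c t‖ * l1norm (A *ᵥ kernelVec K x t) := by
          rw [← Summable.tsum_finsetSum (fun j _ => hsumj j)]
          refine tsum_congr fun t => ?_
          unfold l1norm
          rw [Finset.mul_sum]
        have hleft : Summable (fun t =>
            ‖c t‖ * l1norm (A *ᵥ kernelVec K x t)) := by
          refine Summable.of_nonneg_of_le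
            (fun t => mul_nonneg (norm_nonneg _)
              (Finset.sum_nonneg fun i _ => norm_nonneg _))
            (fun t => mul_le_mul_of_nonneg_left (h t) (norm_nonneg _))
            (hc.mul_right β)
        have h3 : ∑' t, ‖c t‖ * l1norm (A *ᵥ kernelVec K x t)
            ≤ ∑' t, ‖c t‖ * β :=
          Summable.tsum_le_tsum
            (fun t => mul_le_mul_of_nonneg_left (h t) (norm_nonneg _))
            hleft (hc.mul_right β)
        calc l1norm (A *ᵥ y)
            ≤ ∑ j, ∑' t, ‖c t‖ * ‖(A *ᵥ kernelVec K x t) j‖ := h1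
          _ = ∑' t, ‖c t‖ * l1norm (A *ᵥ kernelVec K x t) := h2
          _ ≤ ∑' t, ‖c t‖ * β := h3
          _ = β * ∑' t, ‖c t‖ := by rw [tsum_mul_right, mul_comm]
      rw [one_div, inv_mul_le_iff₀ hβpos]
      exact hbound
  · intro h t
    set c : X → ℂ := fun s => if s = t then 1 else 0 with hcdef
    have habs : (fun s => ‖c s‖) = fun s => if s = t then (1:ℝ) else 0 := by
      funext s; by_cases hs : s = t <;> simp [hcdef, hs]
    have hc : Summable (fun s => ‖c s‖) := by
      rw [habs]; exact (hasSum_ite_eq t (1:ℝ)).summable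
    have htsum : ∑' s, ‖c s‖ = 1 := by
      rw [habs]; exact tsum_ite_eq t (fun _ => (1:ℝ))
    have hphi : ∀ i, PhiMap K c (x i) = kernelVec K x t i := by
      intro i
      unfold PhiMap kernelVec
      have he : (fun s => c s * K s (x i)) = fun s => if s = t then K t (x i) else 0 := by
        funext s; by_cases hs : s = t <;> simp [hcdef, hs]
      rw [he]; exact tsum_ite_eq t _
    have hmain := h (kernelVec K x t) c hc hphi
    rw [htsum, one_div, inv_mul_le_iff₀ hβpos, mul_one] at hmain
    exact hmain
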